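/- For each subdiagonal word d of length n, El(d) = Eul(r(d)), where r reverses the word. -/

import Mathlib

/-- Descent set (ligne of route) of a word, with 1-based positions. -/
def ligne (w : List ℕ) : Finset ℕ :=
  (Finset.Icc 1 (w.length - 1)).filter (fun i => w.getD (i-1) 0 > w.getD i 0)

/-- Major index of a word. -/
def maj (w : List ℕ) : ℕ := ∑ i ∈ ligne w, i

/-- Inversion number of a word. -/
def inv (w : List ℕ) : ℕ :=
  ((Finset.range w.length ×ˢ Finset.range w.length).filter
    (fun p => p.1 < p.2 ∧ w.getD p.1 0 > w.getD p.2 0)).card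

/-- `w` is (the one-line word of) a permutation of `1,…,n`. -/
def IsPermWord (n : ℕ) (w : List ℕ) : Prop := w.Perm (List.range' 1 n)

/-- One-line word of `σ ∈ S_n` with values in `1,…,n`. -/
def toWord {n : ℕ} (σ : Equiv.Perm (Fin n)) : List ℕ := List.ofFn (fun i => (σ i : ℕ) + 1)

/-- Subexcedent word: `0 ≤ d_i ≤ i-1` (1-based), i.e. `d_i ≤ i` for 0-based `i`. -/
def Subexcedent (w : List ℕ) : Prop := ∀ i < w.length, w.getD i 0 ≤ i

/-- Subdiagonal word: `0 ≤ d_i ≤ n-i` (1-based). -/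
def Subdiagonal (w : List ℕ) : Prop := ∀ i < w.length, w.getD i 0 + i + 1 ≤ w.length

/-- Lehmer code: `d_i = #{j < i : x_j > x_i}`. -/
def invcode (w : List ℕ) : List ℕ :=
  (List.range w.length).map (fun i => ((Finset.range i).filter (fun j => w.getD j 0 > w.getD i 0)).card)

/-- `Lc`-code: `d_i = #{j > i : x_i > x_j}`. -/
def lc (w : List ℕ) : List ℕ :=
  (List.range w.length).map (fun i => ((Finset.Ico (i+1) w.length).filter (fun j => w.getD i 0 > w.getD j 0)).card)

/-- Major index code: `d_i = maj(σ|_i) - maj(σ|_{i-1})`, where `σ|_i` erases letters `> i`. -/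
def majcode (w : List ℕ) : List ℕ :=
  (List.range w.length).map (fun i => maj (w.filter (· ≤ i+1)) - maj (w.filter (· ≤ i)))

/-- `Mc`-code: `d_i = maj(σ^{(i)}) - maj(σ^{(i+1)})`, where `σ^{(i)}` erases letters `< i`. -/
def mc (w : List ℕ) : List ℕ :=
  (List.range w.length).map (fun i => maj (w.filter (fun x => i+1 ≤ x)) - maj (w.filter (fun x => i+2 ≤ x)))

/-- One-line word of the inverse permutation. -/
def invWord (w : List ℕ) : List ℕ :=
  (List.range w.length).map (fun i => w.idxOf (i+1) + 1)

/-- `Ic σ = Lc (σ⁻¹)`. -/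
def ic (w : List ℕ) : List ℕ := lc (invWord w)

/-- Inverse ligne of route. -/
def iligne (w : List ℕ) : Finset ℕ := ligne (invWord w)

/-- Complement map `δ` on codes: `δ(d₁⋯d_n) = (0-d₁)(1-d₂)⋯(n-1-d_n)`. -/
def deltaC (w : List ℕ) : List ℕ :=
  (List.range w.length).map (fun i => i - w.getD i 0)

/-- Nondecreasing rearrangement of a word. -/
def sortW (w : List ℕ) : List ℕ := List.insertionSort (· ≤ ·) w

/-- Set-valued statistic `El = Ligne ∘ Mc⁻¹` on subdiagonal words. -/
noncomputable def El (d : List ℕ) : Finset ℕ := by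
  classical
  exact if h : ∃ w, IsPermWord d.length w ∧ mc w = d then ligne h.choose else ∅

/-- Set-valued statistic `Eul = Ligne ∘ Majcode⁻¹` on subexcedent words. -/
noncomputable def Eul (d : List ℕ) : Finset ℕ := by
  classical
  exact if h : ∃ w, IsPermWord d.length w ∧ majcode w = d then ligne h.choose else ∅

namespace Stmt17Aux

lemma getD_map_of_lt (f : ℕ → ℕ) {l : List ℕ} {i : ℕ} (h : i < l.length) :
    (l.map f).getD i 0 = f (l.getD i 0) := by
  rw [List.getD_eq_getElem _ _ (by simpa using h), List.getD_eq_getElem _ _ h, List.getElem_map]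

lemma getD_mem_of_lt {l : List ℕ} {i : ℕ} (h : i < l.length) : l.getD i 0 ∈ l := by
  rw [List.getD_eq_getElem _ _ h]; exact List.getElem_mem h

lemma mem_ligne {w : List ℕ} {i : ℕ} :
    i ∈ ligne w ↔ (1 ≤ i ∧ i ≤ w.length - 1) ∧ w.getD (i-1) 0 > w.getD i 0 := by
  simp [ligne, Finset.mem_filter, Finset.mem_Icc]

lemma ligne_subset (w : List ℕ) : ligne w ⊆ Finset.Icc 1 (w.length - 1) :=
  Finset.filter_subset _ _

lemma maj_congr {a b : List ℕ} (h : ligne a = ligne b) : maj a = maj b := by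
  unfold maj; rw [h]

lemma ligne_map_add_one (w : List ℕ) : ligne (w.map (· + 1)) = ligne w := by
  unfold ligne
  rw [List.length_map]
  apply Finset.filter_congr
  intro i hi
  simp only [Finset.mem_Icc] at hi
  have h1 : i < w.length := by omega
  have h2 : i - 1 < w.length := by omega
  rw [getD_map_of_lt _ h1, getD_map_of_lt _ h2]
  constructor <;> intro h <;> omega

lemma ligne_map_sub_one {w : List ℕ} (hw : ∀ a ∈ w, 1 ≤ a) :
    ligne (w.map (· - 1)) = ligne w := by
  unfold ligne
  rw [List.length_map]
  apply Finset.filter_congr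
  intro i hi
  simp only [Finset.mem_Icc] at hi
  have h1 : i < w.length := by omega
  have h2 : i - 1 < w.length := by omega
  rw [getD_map_of_lt _ h1, getD_map_of_lt _ h2]
  have m1 := hw _ (getD_mem_of_lt h1)
  have m2 := hw _ (getD_mem_of_lt h2)
  constructor <;> intro h <;> omega

/-- insert `x` at index `j`. -/
def ins (v : List ℕ) (j x : ℕ) : List ℕ := v.take j ++ x :: v.drop j

lemma ins_length {v : List ℕ} {j : ℕ} (hj : j ≤ v.length) (x : ℕ) :
    (ins v j x).length = v.length + 1 := by
  simp [ins]; omega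

lemma ins_perm {v : List ℕ} (j x : ℕ) : (ins v j x).Perm (x :: v) := by
  unfold ins
  refine List.perm_middle.trans ?_
  rw [List.take_append_drop]

lemma getD_take_of_lt {v : List ℕ} {i j : ℕ} (h : i < j) (h2 : i < v.length) :
    (v.take j).getD i 0 = v.getD i 0 := by
  rw [List.getD_eq_getElem _ _ (by simp only [List.length_take, List.length_cons, List.length_drop]; omega), List.getD_eq_getElem _ _ h2, List.getElem_take]

lemma getD_ins_lt {v : List ℕ} {j x i : ℕ} (hj : j ≤ v.length) (h : i < j) :
    (ins v j x).getD i 0 = v.getD i 0 := by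
  unfold ins
  rw [List.getD_append _ _ _ _ (by simp only [List.length_take, List.length_cons, List.length_drop]; omega)]
  exact getD_take_of_lt h (by omega)

lemma getD_ins_self {v : List ℕ} {j x : ℕ} (hj : j ≤ v.length) :
    (ins v j x).getD j 0 = x := by
  unfold ins
  rw [List.getD_append_right _ _ _ _ (by simp only [List.length_take, List.length_cons, List.length_drop]; omega)]
  simp [Nat.min_eq_left hj]

lemma getD_ins_gt {v : List ℕ} {j x i : ℕ} (hj : j ≤ v.length) (h : j < i) :
    (ins v j x).getD i 0 = v.getD (i-1) 0 := by
  unfold ins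
  rw [List.getD_append_right _ _ _ _ (by simp only [List.length_take, List.length_cons, List.length_drop]; omega)]
  have hlt : i - (v.take j).length = (i - j - 1) + 1 := by simp only [List.length_take, List.length_cons, List.length_drop]; omega
  rw [hlt]
  simp only [List.getD_cons_succ]
  by_cases hi : i - 1 < v.length
  · rw [List.getD_eq_getElem _ _ (by simp only [List.length_take, List.length_cons, List.length_drop]; omega), List.getD_eq_getElem _ _ hi,
      List.getElem_drop]
    congr 1; omega
  · rw [List.getD_eq_default _ _ (by simp only [List.length_take, List.length_cons, List.length_drop]; omega), List.getD_eq_default _ _ (by omega)]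

/-- descent predicate after inserting a smallest letter at index `j`. -/
def desS (S : Finset ℕ) (j i : ℕ) : Prop :=
  (i < j ∧ i ∈ S) ∨ i = j ∨ (j + 2 ≤ i ∧ (i-1) ∈ S)

/-- descent predicate after inserting a largest letter at index `j`. -/
def desL (S : Finset ℕ) (j i : ℕ) : Prop :=
  (i < j ∧ i ∈ S) ∨ i = j + 1 ∨ (j + 2 ≤ i ∧ (i-1) ∈ S)

instance (S : Finset ℕ) (j i : ℕ) : Decidable (desS S j i) := by unfold desS; infer_instance
instance (S : Finset ℕ) (j i : ℕ) : Decidable (desL S j i) := by unfold desL; infer_instance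

def NewS (S : Finset ℕ) (j m : ℕ) : Finset ℕ := (Finset.Icc 1 m).filter (desS S j)
def NewL (S : Finset ℕ) (j m : ℕ) : Finset ℕ := (Finset.Icc 1 m).filter (desL S j)

lemma dS_lt {S : Finset ℕ} {j i : ℕ} (h : i < j) : desS S j i ↔ i ∈ S := by
  unfold desS
  constructor
  · rintro (⟨_, h2⟩ | h2 | ⟨h2, _⟩) <;> first | exact h2 | omega
  · intro hi; exact Or.inl ⟨h, hi⟩

lemma dS_eq {S : Finset ℕ} {j : ℕ} : desS S j j := Or.inr (Or.inl rfl)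

lemma dS_succ {S : Finset ℕ} {j : ℕ} : ¬ desS S j (j+1) := by
  rintro (⟨h, _⟩ | h | ⟨h, _⟩) <;> omega

lemma dS_gt {S : Finset ℕ} {j i : ℕ} (h : j + 2 ≤ i) : desS S j i ↔ (i-1) ∈ S := by
  unfold desS
  constructor
  · rintro (⟨h2, _⟩ | h2 | ⟨_, h2⟩) <;> first | exact h2 | omega
  · intro hi; exact Or.inr (Or.inr ⟨h, hi⟩)

lemma dL_lt {S : Finset ℕ} {j i : ℕ} (h : i < j) : desL S j i ↔ i ∈ S := by
  unfold desL
  constructor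
  · rintro (⟨_, h2⟩ | h2 | ⟨h2, _⟩) <;> first | exact h2 | omega
  · intro hi; exact Or.inl ⟨h, hi⟩

lemma dL_eq {S : Finset ℕ} {j : ℕ} : ¬ desL S j j := by
  rintro (⟨h, _⟩ | h | ⟨h, _⟩) <;> omega

lemma dL_succ {S : Finset ℕ} {j : ℕ} : desL S j (j+1) := Or.inr (Or.inl rfl)

lemma dL_gt {S : Finset ℕ} {j i : ℕ} (h : j + 2 ≤ i) : desL S j i ↔ (i-1) ∈ S := by
  unfold desL
  constructor
  · rintro (⟨h2, _⟩ | h2 | ⟨_, h2⟩) <;> first | exact h2 | omega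
  · intro hi; exact Or.inr (Or.inr ⟨h, hi⟩)

lemma ligne_ins_small {v : List ℕ} {j x : ℕ} (hj : j ≤ v.length)
    (hx : ∀ a ∈ v, x < a) :
    ligne (ins v j x) = NewS (ligne v) j v.length := by
  unfold ligne NewS
  rw [ins_length hj, Nat.add_sub_cancel]
  apply Finset.filter_congr
  intro i hi
  simp only [Finset.mem_Icc] at hi
  rcases Nat.lt_trichotomy i j with hij | hij | hij
  · rw [getD_ins_lt hj (by omega), getD_ins_lt hj hij, dS_lt hij, Finset.mem_filter,
      Finset.mem_Icc]
    constructor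
    · exact fun h => ⟨⟨hi.1, by omega⟩, h⟩
    · exact fun h => h.2
  · subst hij
    have h1 : i - 1 < i := by omega
    rw [getD_ins_lt hj h1, getD_ins_self hj]
    simp only [dS_eq, iff_true, gt_iff_lt]
    exact hx _ (getD_mem_of_lt (by omega))
  · rcases Nat.lt_or_ge i (j+2) with hij2 | hij2
    · have hi1 : i = j + 1 := by omega
      subst hi1
      rw [Nat.add_sub_cancel, getD_ins_self hj, getD_ins_gt hj hij, Nat.add_sub_cancel]
      simp only [dS_succ, iff_false, gt_iff_lt, not_lt]
      exact le_of_lt (hx _ (getD_mem_of_lt (by omega)))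
    · rw [getD_ins_gt hj hij, getD_ins_gt hj (by omega), dS_gt hij2, Finset.mem_filter,
        Finset.mem_Icc]
      have e : i - 1 - 1 = i - 2 := by omega
      rw [e]
      constructor
      · exact fun h => ⟨⟨by omega, by omega⟩, h⟩
      · exact fun h => h.2

lemma ligne_ins_large {v : List ℕ} {j y : ℕ} (hj : j ≤ v.length)
    (hy : ∀ a ∈ v, a < y) :
    ligne (ins v j y) = NewL (ligne v) j v.length := by
  unfold ligne NewL
  rw [ins_length hj, Nat.add_sub_cancel]
  apply Finset.filter_congr
  intro i hi
  simp only [Finset.mem_Icc] at hi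
  rcases Nat.lt_trichotomy i j with hij | hij | hij
  · rw [getD_ins_lt hj (by omega), getD_ins_lt hj hij, dL_lt hij, Finset.mem_filter,
      Finset.mem_Icc]
    constructor
    · exact fun h => ⟨⟨hi.1, by omega⟩, h⟩
    · exact fun h => h.2
  · subst hij
    have h1 : i - 1 < i := by omega
    rw [getD_ins_lt hj h1, getD_ins_self hj]
    simp only [dL_eq, iff_false, gt_iff_lt, not_lt]
    exact le_of_lt (hy _ (getD_mem_of_lt (show i - 1 < v.length by omega)))
  · rcases Nat.lt_or_ge i (j+2) with hij2 | hij2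
    · have hi1 : i = j + 1 := by omega
      subst hi1
      rw [Nat.add_sub_cancel, getD_ins_self hj, getD_ins_gt hj hij, Nat.add_sub_cancel]
      simp only [dL_succ, iff_true, gt_iff_lt]
      exact hy _ (getD_mem_of_lt (show j < v.length by omega))
    · rw [getD_ins_gt hj hij, getD_ins_gt hj (by omega), dL_gt hij2, Finset.mem_filter,
        Finset.mem_Icc]
      have e : i - 1 - 1 = i - 2 := by omega
      rw [e]
      constructor
      · exact fun h => ⟨⟨by omega, by omega⟩, h⟩
      · exact fun h => h.2


def cnt (S : Finset ℕ) (j : ℕ) : ℕ := (S.filter (fun x => j < x)).card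

def gS (S : Finset ℕ) (j : ℕ) : ℕ := if j ∈ S then cnt S j else j + cnt S j

def gL (S : Finset ℕ) (j m : ℕ) : ℕ :=
  if j ∈ S then 1 + cnt S j else if j < m then j + 1 + cnt S j else cnt S j

lemma cnt_lt_of_mem {S : Finset ℕ} {j j' : ℕ} (hj' : j' ∈ S) (h : j < j') :
    cnt S j' + 1 ≤ cnt S j := by
  have hnot : j' ∉ S.filter (fun x => j' < x) := by simp
  have hsub : insert j' (S.filter (fun x => j' < x)) ⊆ S.filter (fun x => j < x) := by
    intro x hx
    rcases Finset.mem_insert.mp hx with rfl | hx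
    · exact Finset.mem_filter.mpr ⟨hj', h⟩
    · have := Finset.mem_filter.mp hx
      exact Finset.mem_filter.mpr ⟨this.1, by omega⟩
  have := Finset.card_le_card hsub
  rw [Finset.card_insert_of_notMem hnot] at this
  exact this

lemma cnt_le_add {S : Finset ℕ} {j j' : ℕ} (hj' : j' ∉ S) (h : j ≤ j') :
    cnt S j ≤ cnt S j' + (j' - j - 1) := by
  have hsub : S.filter (fun x => j < x) ⊆
      S.filter (fun x => j' < x) ∪ Finset.Icc (j+1) (j'-1) := by
    intro x hx
    have hx' := Finset.mem_filter.mp hx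
    rcases Nat.lt_or_ge j' x with h2 | h2
    · exact Finset.mem_union_left _ (Finset.mem_filter.mpr ⟨hx'.1, h2⟩)
    · have : x ≠ j' := fun he => hj' (he ▸ hx'.1)
      exact Finset.mem_union_right _ (Finset.mem_Icc.mpr ⟨by omega, by omega⟩)
  have := Finset.card_le_card hsub
  have h2 := Finset.card_union_le (S.filter (fun x => j' < x)) (Finset.Icc (j+1) (j'-1))
  have h3 : (Finset.Icc (j+1) (j'-1)).card = j' - j - 1 := by rw [Nat.card_Icc]; omega
  unfold cnt
  omega

lemma cnt_le_bound {S : Finset ℕ} {m j : ℕ} (hS : S ⊆ Finset.Icc 1 (m-1)) :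
    cnt S j ≤ m - 1 - j := by
  have hsub : S.filter (fun x => j < x) ⊆ Finset.Icc (j+1) (m-1) := by
    intro x hx
    have hx' := Finset.mem_filter.mp hx
    have := Finset.mem_Icc.mp (hS hx'.1)
    exact Finset.mem_Icc.mpr ⟨by omega, by omega⟩
  have := Finset.card_le_card hsub
  have h3 : (Finset.Icc (j+1) (m-1)).card = m - 1 - j := by rw [Nat.card_Icc]; omega
  unfold cnt
  omega

lemma gS_ne {S : Finset ℕ} {m j j' : ℕ} (hS : S ⊆ Finset.Icc 1 (m-1)) (hlt : j < j') :
    gS S j ≠ gS S j' := by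
  unfold gS
  by_cases h1 : j ∈ S <;> by_cases h2 : j' ∈ S
  · rw [if_pos h1, if_pos h2]
    have := cnt_lt_of_mem h2 hlt
    omega
  · rw [if_pos h1, if_neg h2]
    have hb := cnt_le_add h2 (le_of_lt hlt)
    have hj1 : 1 ≤ j := (Finset.mem_Icc.mp (hS h1)).1
    omega
  · rw [if_neg h1, if_pos h2]
    have := cnt_lt_of_mem h2 hlt
    omega
  · rw [if_neg h1, if_neg h2]
    have := cnt_le_add h2 (le_of_lt hlt)
    omega

lemma gS_inj {S : Finset ℕ} {m j j' : ℕ} (hS : S ⊆ Finset.Icc 1 (m-1))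
    (h : gS S j = gS S j') : j = j' := by
  rcases Nat.lt_trichotomy j j' with hl | hl | hl
  · exact absurd h (gS_ne hS hl)
  · exact hl
  · exact absurd h.symm (gS_ne hS hl)

lemma gS_le {S : Finset ℕ} {m j : ℕ} (hS : S ⊆ Finset.Icc 1 (m-1)) (hj : j ≤ m) :
    gS S j ≤ m := by
  have := cnt_le_bound (j := j) hS
  unfold gS
  split_ifs <;> omega

lemma gS_surj {S : Finset ℕ} {m k : ℕ} (hS : S ⊆ Finset.Icc 1 (m-1)) (hk : k ≤ m) :
    ∃ j, j ≤ m ∧ gS S j = k := by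
  have himg : (Finset.Icc 0 m).image (gS S) ⊆ Finset.Icc 0 m := by
    intro x hx
    obtain ⟨j, hj, rfl⟩ := Finset.mem_image.mp hx
    exact Finset.mem_Icc.mpr ⟨Nat.zero_le _, gS_le hS (Finset.mem_Icc.mp hj).2⟩
  have hcard : (Finset.Icc 0 m).card ≤ ((Finset.Icc 0 m).image (gS S)).card := by
    rw [Finset.card_image_of_injOn (fun a _ b _ hab => gS_inj hS hab)]
  have heq := Finset.eq_of_subset_of_card_le himg hcard
  have hkmem : k ∈ (Finset.Icc 0 m).image (gS S) := by
    rw [heq]; exact Finset.mem_Icc.mpr ⟨Nat.zero_le _, hk⟩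
  obtain ⟨j, hj, hgj⟩ := Finset.mem_image.mp hkmem
  exact ⟨j, (Finset.mem_Icc.mp hj).2, hgj⟩

lemma gL_ne {S : Finset ℕ} {m j j' : ℕ} (hS : S ⊆ Finset.Icc 1 (m-1))
    (hj' : j' ≤ m) (hlt : j < j') : gL S j m ≠ gL S j' m := by
  unfold gL
  have hjm : j < m := by omega
  by_cases h1 : j ∈ S <;> by_cases h2 : j' ∈ S
  · rw [if_pos h1, if_pos h2]
    have := cnt_lt_of_mem h2 hlt
    omega
  · rw [if_pos h1, if_neg h2]
    have hb := cnt_le_add h2 (le_of_lt hlt)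
    have hj1 : 1 ≤ j := (Finset.mem_Icc.mp (hS h1)).1
    by_cases h3 : j' < m
    · rw [if_pos h3]; omega
    · rw [if_neg h3]
      have h4 : j' = m := by omega
      have := cnt_le_bound (j := j') hS
      omega
  · rw [if_neg h1, if_pos h2, if_pos hjm]
    have := cnt_lt_of_mem h2 hlt
    omega
  · rw [if_neg h1, if_neg h2, if_pos hjm]
    have hb := cnt_le_add h2 (le_of_lt hlt)
    by_cases h3 : j' < m
    · rw [if_pos h3]; omega
    · rw [if_neg h3]
      have h4 : j' = m := by omega
      have := cnt_le_bound (j := j') hS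
      omega

lemma gL_inj {S : Finset ℕ} {m j j' : ℕ} (hS : S ⊆ Finset.Icc 1 (m-1))
    (hj : j ≤ m) (hj' : j' ≤ m) (h : gL S j m = gL S j' m) : j = j' := by
  rcases Nat.lt_trichotomy j j' with hl | hl | hl
  · exact absurd h (gL_ne hS hj' hl)
  · exact hl
  · exact absurd h.symm (gL_ne hS hj hl)


lemma NewS_eq {S : Finset ℕ} {m j : ℕ} (hS : S ⊆ Finset.Icc 1 (m-1)) (hj : j ≤ m) :
    NewS S j m = (S.filter (fun x => x < j) ∪ (if 1 ≤ j then {j} else ∅)) ∪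
      (S.filter (fun x => j < x)).image (· + 1) := by
  ext i
  simp only [NewS, desS, Finset.mem_filter, Finset.mem_Icc, Finset.mem_union, Finset.mem_image]
  constructor
  · rintro ⟨⟨h1, h2⟩, hd⟩
    rcases hd with ⟨hlt, hiS⟩ | rfl | ⟨hge, hiS⟩
    · exact Or.inl (Or.inl ⟨hiS, hlt⟩)
    · refine Or.inl (Or.inr ?_)
      rw [if_pos h1]
      exact Finset.mem_singleton_self _
    · exact Or.inr ⟨i - 1, ⟨hiS, by omega⟩, by omega⟩
  · rintro ((⟨hiS, hlt⟩ | hB) | ⟨a, ⟨haS, hagt⟩, rfl⟩)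
    · have := Finset.mem_Icc.mp (hS hiS)
      exact ⟨⟨by omega, by omega⟩, Or.inl ⟨hlt, hiS⟩⟩
    · have hj1 : 1 ≤ j := by
        by_contra hc
        rw [if_neg hc] at hB
        exact absurd hB (Finset.notMem_empty _)
      rw [if_pos hj1, Finset.mem_singleton] at hB
      subst hB
      exact ⟨⟨hj1, hj⟩, Or.inr (Or.inl rfl)⟩
    · have := Finset.mem_Icc.mp (hS haS)
      exact ⟨⟨by omega, by omega⟩, Or.inr (Or.inr ⟨by omega, by simpa using haS⟩)⟩

lemma NewL_eq {S : Finset ℕ} {m j : ℕ} (hS : S ⊆ Finset.Icc 1 (m-1)) (hj : j ≤ m) :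
    NewL S j m = (S.filter (fun x => x < j) ∪ (if j < m then {j+1} else ∅)) ∪
      (S.filter (fun x => j < x)).image (· + 1) := by
  ext i
  simp only [NewL, desL, Finset.mem_filter, Finset.mem_Icc, Finset.mem_union, Finset.mem_image]
  constructor
  · rintro ⟨⟨h1, h2⟩, hd⟩
    rcases hd with ⟨hlt, hiS⟩ | rfl | ⟨hge, hiS⟩
    · exact Or.inl (Or.inl ⟨hiS, hlt⟩)
    · refine Or.inl (Or.inr ?_)
      rw [if_pos (by omega : j < m)]
      exact Finset.mem_singleton_self _
    · exact Or.inr ⟨i - 1, ⟨hiS, by omega⟩, by omega⟩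
  · rintro ((⟨hiS, hlt⟩ | hB) | ⟨a, ⟨haS, hagt⟩, rfl⟩)
    · have := Finset.mem_Icc.mp (hS hiS)
      exact ⟨⟨by omega, by omega⟩, Or.inl ⟨hlt, hiS⟩⟩
    · have hj1 : j < m := by
        by_contra hc
        rw [if_neg hc] at hB
        exact absurd hB (Finset.notMem_empty _)
      rw [if_pos hj1, Finset.mem_singleton] at hB
      subst hB
      exact ⟨⟨by omega, by omega⟩, Or.inr (Or.inl rfl)⟩
    · have := Finset.mem_Icc.mp (hS haS)
      exact ⟨⟨by omega, by omega⟩, Or.inr (Or.inr ⟨by omega, by simpa using haS⟩)⟩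

lemma sum_split {S : Finset ℕ} (j : ℕ) :
    S.sum (fun i => i) = (S.filter (fun x => x < j)).sum (fun i => i) + ((if j ∈ S then j else 0) +
      (S.filter (fun x => j < x)).sum (fun i => i)) := by
  rw [← Finset.sum_filter_add_sum_filter_not S (fun x => x < j)]
  congr 1
  have hsplit : S.filter (fun x => ¬ x < j) =
      (if j ∈ S then ({j} : Finset ℕ) else ∅) ∪ S.filter (fun x => j < x) := by
    ext x
    simp only [Finset.mem_filter, Finset.mem_union]
    constructor
    · rintro ⟨hxS, hx⟩
      rcases Nat.lt_or_ge j x with h | h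
      · exact Or.inr ⟨hxS, h⟩
      · have : x = j := by omega
        subst this
        rw [if_pos hxS]
        exact Or.inl (Finset.mem_singleton_self _)
    · rintro (hx | ⟨hxS, hx⟩)
      · by_cases hjS : j ∈ S
        · rw [if_pos hjS, Finset.mem_singleton] at hx
          subst hx
          exact ⟨hjS, by omega⟩
        · rw [if_neg hjS] at hx
          exact absurd hx (Finset.notMem_empty _)
      · exact ⟨hxS, by omega⟩
  rw [hsplit, Finset.sum_union]
  · congr 1
    by_cases hjS : j ∈ S
    · rw [if_pos hjS, if_pos hjS, Finset.sum_singleton]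
    · rw [if_neg hjS, if_neg hjS, Finset.sum_empty]
  · rw [Finset.disjoint_left]
    intro a ha ha2
    have h2 := Finset.mem_filter.mp ha2
    by_cases hjS : j ∈ S
    · rw [if_pos hjS, Finset.mem_singleton] at ha
      omega
    · rw [if_neg hjS] at ha
      exact absurd ha (Finset.notMem_empty _)

lemma sum_image_succ (T : Finset ℕ) :
    (T.image (· + 1)).sum (fun i => i) = T.sum (fun i => i) + T.card := by
  rw [Finset.sum_image (by intro x _ y _ h; exact Nat.add_right_cancel h)]
  rw [Finset.sum_add_distrib, Finset.sum_const, smul_eq_mul, mul_one]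

lemma sum_NewS {S : Finset ℕ} {m j : ℕ} (hS : S ⊆ Finset.Icc 1 (m-1)) (hj : j ≤ m) :
    (NewS S j m).sum (fun i => i) = S.sum (fun i => i) + gS S j := by
  rw [NewS_eq hS hj]
  have hd1 : Disjoint (S.filter (fun x => x < j)) (if 1 ≤ j then ({j} : Finset ℕ) else ∅) := by
    rw [Finset.disjoint_left]
    intro a ha ha2
    have h1 := Finset.mem_filter.mp ha
    by_cases hc : 1 ≤ j
    · rw [if_pos hc, Finset.mem_singleton] at ha2; omega
    · rw [if_neg hc] at ha2; exact absurd ha2 (Finset.notMem_empty _)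
  have hd2 : Disjoint (S.filter (fun x => x < j) ∪ (if 1 ≤ j then ({j} : Finset ℕ) else ∅))
      ((S.filter (fun x => j < x)).image (· + 1)) := by
    rw [Finset.disjoint_left]
    intro a ha ha2
    obtain ⟨b, hb, rfl⟩ := Finset.mem_image.mp ha2
    have hb' := Finset.mem_filter.mp hb
    rcases Finset.mem_union.mp ha with h | h
    · have := Finset.mem_filter.mp h; omega
    · by_cases hc : 1 ≤ j
      · rw [if_pos hc, Finset.mem_singleton] at h; omega
      · rw [if_neg hc] at h; exact absurd h (Finset.notMem_empty _)
  rw [Finset.sum_union hd2, Finset.sum_union hd1, sum_image_succ]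
  rw [sum_split (S := S) j]
  have hsing : (if 1 ≤ j then ({j} : Finset ℕ) else ∅).sum (fun i => i) = if 1 ≤ j then j else 0 := by
    by_cases hc : 1 ≤ j
    · rw [if_pos hc, if_pos hc, Finset.sum_singleton]
    · rw [if_neg hc, if_neg hc, Finset.sum_empty]
  rw [hsing]
  unfold gS cnt
  by_cases hjS : j ∈ S
  · have hb := Finset.mem_Icc.mp (hS hjS)
    simp only [if_pos hjS]
    split_ifs <;> omega
  · simp only [if_neg hjS]
    split_ifs <;> omega

lemma sum_NewL {S : Finset ℕ} {m j : ℕ} (hS : S ⊆ Finset.Icc 1 (m-1)) (hj : j ≤ m) :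
    (NewL S j m).sum (fun i => i) = S.sum (fun i => i) + gL S j m := by
  rw [NewL_eq hS hj]
  have hd1 : Disjoint (S.filter (fun x => x < j)) (if j < m then ({j+1} : Finset ℕ) else ∅) := by
    rw [Finset.disjoint_left]
    intro a ha ha2
    have h1 := Finset.mem_filter.mp ha
    by_cases hc : j < m
    · rw [if_pos hc, Finset.mem_singleton] at ha2; omega
    · rw [if_neg hc] at ha2; exact absurd ha2 (Finset.notMem_empty _)
  have hd2 : Disjoint (S.filter (fun x => x < j) ∪ (if j < m then ({j+1} : Finset ℕ) else ∅))
      ((S.filter (fun x => j < x)).image (· + 1)) := by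
    rw [Finset.disjoint_left]
    intro a ha ha2
    obtain ⟨b, hb, rfl⟩ := Finset.mem_image.mp ha2
    have hb' := Finset.mem_filter.mp hb
    rcases Finset.mem_union.mp ha with h | h
    · have := Finset.mem_filter.mp h; omega
    · by_cases hc : j < m
      · rw [if_pos hc, Finset.mem_singleton] at h; omega
      · rw [if_neg hc] at h; exact absurd h (Finset.notMem_empty _)
  rw [Finset.sum_union hd2, Finset.sum_union hd1, sum_image_succ]
  rw [sum_split (S := S) j]
  have hsing : (if j < m then ({j+1} : Finset ℕ) else ∅).sum (fun i => i) = if j < m then j+1 else 0 := by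
    by_cases hc : j < m
    · rw [if_pos hc, if_pos hc, Finset.sum_singleton]
    · rw [if_neg hc, if_neg hc, Finset.sum_empty]
  rw [hsing]
  unfold gL cnt
  by_cases hjS : j ∈ S
  · have hb := Finset.mem_Icc.mp (hS hjS)
    simp only [if_pos hjS]
    split_ifs <;> omega
  · simp only [if_neg hjS]
    split_ifs <;> omega


lemma crux {S : Finset ℕ} {m j : ℕ} (hS : S ⊆ Finset.Icc 1 (m-1)) (hj : j ≤ m) :
    ∃ p ≤ m, NewL S p m = NewS S j m := by
  by_cases hj0 : j ∈ S ∨ j = 0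
  · by_cases hne : (S.filter (fun x => j < x)).Nonempty
    · -- p = min of descents above j
      set p := (S.filter (fun x => j < x)).min' hne with hpdef
      have hpmem := Finset.min'_mem _ hne
      rw [Finset.mem_filter] at hpmem
      have hpS : p ∈ S := hpmem.1
      have hjp : j < p := hpmem.2
      have hmin : ∀ s ∈ S, j < s → p ≤ s := fun s hs hjs =>
        Finset.min'_le _ _ (Finset.mem_filter.mpr ⟨hs, hjs⟩)
      have hpm : p ≤ m := by
        have := Finset.mem_Icc.mp (hS hpS); omega
      refine ⟨p, hpm, ?_⟩
      unfold NewL NewS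
      apply Finset.filter_congr
      intro i hi
      simp only [Finset.mem_Icc] at hi
      rcases Nat.lt_trichotomy i j with h1 | h1 | h1
      · rw [dL_lt (by omega), dS_lt h1]
      · subst h1
        have hiS : i ∈ S := hj0.resolve_right (by omega)
        exact iff_of_true ((dL_lt hjp).mpr hiS) dS_eq
      · rcases Nat.lt_or_ge i (j+2) with h2 | h2
        · have he : i = j+1 := by omega
          subst he
          refine iff_of_false ?_ dS_succ
          rcases Nat.lt_trichotomy (j+1) p with h3 | h3 | h3
          · rw [dL_lt h3]
            intro hmem
            exact absurd (hmin _ hmem (by omega)) (by omega)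
          · rw [h3]; exact dL_eq
          · omega
        · rcases Nat.lt_trichotomy i p with h3 | h3 | h3
          · refine iff_of_false ?_ ?_
            · rw [dL_lt h3]
              intro hmem
              exact absurd (hmin _ hmem (by omega)) (by omega)
            · rw [dS_gt h2]
              intro hmem
              exact absurd (hmin _ hmem (by omega)) (by omega)
          · subst h3
            refine iff_of_false dL_eq ?_
            rw [dS_gt h2]
            intro hmem
            exact absurd (hmin _ hmem (by omega)) (by omega)
          · rcases Nat.lt_or_ge i (p+2) with h4 | h4
            · have he : i = p+1 := by omega
              subst he
              refine iff_of_true dL_succ ?_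
              rw [dS_gt h2]
              simpa using hpS
            · rw [dL_gt h4, dS_gt h2]
    · -- no descent above j : p = m
      have hub : ∀ s ∈ S, s ≤ j := by
        intro s hs
        by_contra hc
        exact hne ⟨s, Finset.mem_filter.mpr ⟨hs, by omega⟩⟩
      refine ⟨m, le_refl m, ?_⟩
      unfold NewL NewS
      apply Finset.filter_congr
      intro i hi
      simp only [Finset.mem_Icc] at hi
      rcases Nat.lt_trichotomy i j with h1 | h1 | h1
      · rw [dL_lt (by omega), dS_lt h1]
      · subst h1
        have hiS : i ∈ S := hj0.resolve_right (by omega)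
        have him : i < m := by
          have := Finset.mem_Icc.mp (hS hiS); omega
        exact iff_of_true ((dL_lt him).mpr hiS) dS_eq
      · rcases Nat.lt_or_ge i (j+2) with h2 | h2
        · have he : i = j+1 := by omega
          subst he
          refine iff_of_false ?_ dS_succ
          rcases Nat.lt_trichotomy (j+1) m with h3 | h3 | h3
          · rw [dL_lt h3]
            intro hmem
            exact absurd (hub _ hmem) (by omega)
          · rw [h3]; exact dL_eq
          · omega
        · refine iff_of_false ?_ ?_
          · rcases Nat.lt_trichotomy i m with h3 | h3 | h3
            · rw [dL_lt h3]
              intro hmem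
              exact absurd (hub _ hmem) (by omega)
            · rw [h3]; exact dL_eq
            · omega
          · rw [dS_gt h2]
            intro hmem
            exact absurd (hub _ hmem) (by omega)
  · -- j ∉ S and j ≥ 1 : p = last non-descent below j
    push_neg at hj0
    obtain ⟨hjS, hj1⟩ := hj0
    have hj1' : 1 ≤ j := by omega
    have h0S : (0 : ℕ) ∉ S := by
      intro h
      have := Finset.mem_Icc.mp (hS h); omega
    have hne : ((Finset.range j).filter (fun t => t ∉ S)).Nonempty :=
      ⟨0, Finset.mem_filter.mpr ⟨Finset.mem_range.mpr (by omega), h0S⟩⟩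
    set p := ((Finset.range j).filter (fun t => t ∉ S)).max' hne with hpdef
    have hpmem := Finset.max'_mem _ hne
    rw [Finset.mem_filter, Finset.mem_range] at hpmem
    have hpj : p < j := hpmem.1
    have hpS : p ∉ S := hpmem.2
    have hmax : ∀ t, t < j → t ∉ S → t ≤ p := fun t h1 h2 =>
      Finset.le_max' _ _ (Finset.mem_filter.mpr ⟨Finset.mem_range.mpr h1, h2⟩)
    have hrun : ∀ t, p < t → t < j → t ∈ S := by
      intro t h1 h2
      by_contra hc
      exact absurd (hmax t h2 hc) (by omega)
    refine ⟨p, by omega, ?_⟩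
    unfold NewL NewS
    apply Finset.filter_congr
    intro i hi
    simp only [Finset.mem_Icc] at hi
    rcases Nat.lt_trichotomy i p with h1 | h1 | h1
    · rw [dL_lt h1, dS_lt (by omega)]
    · subst h1
      refine iff_of_false dL_eq ?_
      rw [dS_lt hpj]
      exact hpS
    · rcases Nat.lt_or_ge i (p+2) with h2 | h2
      · have he : i = p+1 := by omega
        subst he
        refine iff_of_true dL_succ ?_
        rcases Nat.lt_trichotomy (p+1) j with h3 | h3 | h3
        · rw [dS_lt h3]
          exact hrun _ (by omega) h3
        · rw [h3]; exact dS_eq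
        · omega
      · rcases Nat.lt_trichotomy i j with h3 | h3 | h3
        · refine iff_of_true ?_ ?_
          · rw [dL_gt h2]
            exact hrun _ (by omega) (by omega)
          · rw [dS_lt h3]
            exact hrun _ (by omega) h3
        · subst h3
          refine iff_of_true ?_ dS_eq
          rw [dL_gt h2]
          exact hrun _ (by omega) (by omega)
        · rcases Nat.lt_or_ge i (j+2) with h4 | h4
          · have he : i = j+1 := by omega
            subst he
            refine iff_of_false ?_ dS_succ
            rw [dL_gt h2]
            simpa using hjS
          · rw [dL_gt h2, dS_gt h4]

lemma perm_word_length {n : ℕ} {w : List ℕ} (hw : IsPermWord n w) : w.length = n := by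
  rw [hw.length_eq, List.length_range']

lemma perm_word_mem {n : ℕ} {w : List ℕ} (hw : IsPermWord n w) {a : ℕ} (ha : a ∈ w) :
    1 ≤ a ∧ a < n + 1 := by
  have h := hw.mem_iff.mp ha
  rw [List.mem_range'_1] at h
  omega

lemma perm_word_nodup {n : ℕ} {w : List ℕ} (hw : IsPermWord n w) : w.Nodup :=
  hw.nodup_iff.mpr List.nodup_range'

lemma range'_succ_left (n : ℕ) : List.range' 1 (n+1) = 1 :: List.range' 2 n := by
  rw [List.range'_succ]

lemma range'_succ_right (n : ℕ) : List.range' 1 (n+1) = List.range' 1 n ++ [n+1] := by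
  rw [List.range'_concat]
  congr 1
  simp only [Nat.mul_one, List.cons.injEq, and_true]
  omega

lemma filter_le_n {n : ℕ} : (List.range' 1 (n+1)).filter (fun x => x ≤ n) = List.range' 1 n := by
  rw [range'_succ_right, List.filter_append]
  have h1 : (List.range' 1 n).filter (fun x => x ≤ n) = List.range' 1 n :=
    List.filter_eq_self.mpr (fun a ha => by
      rw [List.mem_range'_1] at ha
      simp only [decide_eq_true_eq]
      omega)
  have h2 : ([n+1] : List ℕ).filter (fun x => x ≤ n) = [] := by
    rw [List.filter_cons_of_neg (by simp only [decide_eq_true_eq]; omega)]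
    rfl
  rw [h1, h2, List.append_nil]

lemma filter_ge2 {n : ℕ} : (List.range' 1 (n+1)).filter (fun x => 2 ≤ x) = List.range' 2 n := by
  rw [range'_succ_left]
  rw [List.filter_cons_of_neg (by simp only [decide_eq_true_eq]; omega)]
  exact List.filter_eq_self.mpr (fun a ha => by
    rw [List.mem_range'_1] at ha
    simp only [decide_eq_true_eq]
    omega)

lemma map_add_one_range' (n : ℕ) : (List.range' 1 n).map (· + 1) = List.range' 2 n := by
  simp only [List.range'_eq_map_range, List.map_map]
  exact List.map_congr_left (fun a _ => by simp only [Function.comp_apply]; omega)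

lemma map_sub_one_range' (n : ℕ) : (List.range' 2 n).map (· - 1) = List.range' 1 n := by
  simp only [List.range'_eq_map_range, List.map_map]
  exact List.map_congr_left (fun a _ => by simp only [Function.comp_apply]; omega)

lemma filter_ins {v : List ℕ} (j x : ℕ) (p : ℕ → Bool) (hx : ¬ p x = true)
    (hv : ∀ a ∈ v, p a = true) : (ins v j x).filter p = v := by
  unfold ins
  rw [List.filter_append, List.filter_cons_of_neg hx,
    List.filter_eq_self.mpr (fun a ha => hv a (List.mem_of_mem_take ha)),
    List.filter_eq_self.mpr (fun a ha => hv a (List.mem_of_mem_drop ha)),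
    List.take_append_drop]

lemma decomp {w : List ℕ} {x : ℕ} (hx : x ∈ w) (hnd : w.Nodup) (p : ℕ → Bool)
    (hpx : ¬ p x = true) (hp : ∀ a ∈ w, a ≠ x → p a = true) :
    ∃ j ≤ (w.filter p).length, w = ins (w.filter p) j x := by
  have hcount : List.count x w = 1 := List.count_eq_one_of_mem hnd hx
  obtain ⟨t₁, t₂, hw⟩ := List.append_of_mem hx
  subst hw
  rw [List.count_append, List.count_cons_self] at hcount
  have hxt₁ : x ∉ t₁ := List.count_eq_zero.mp (by omega)
  have hxt₂ : x ∉ t₂ := List.count_eq_zero.mp (by omega)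
  have hfil : (t₁ ++ x :: t₂).filter p = t₁ ++ t₂ := by
    rw [List.filter_append, List.filter_cons_of_neg hpx,
      List.filter_eq_self.mpr (fun a ha => hp a (by simp [ha]) (fun he => hxt₁ (he ▸ ha))),
      List.filter_eq_self.mpr (fun a ha => hp a (by simp [ha]) (fun he => hxt₂ (he ▸ ha)))]
  refine ⟨t₁.length, ?_, ?_⟩
  · rw [hfil]
    simp
  · rw [hfil]
    unfold ins
    rw [List.take_left, List.drop_left]

lemma length_majcode (w : List ℕ) : (majcode w).length = w.length := by
  simp [majcode]

lemma maj_map_filter_shift {w : List ℕ} (hw1 : ∀ a ∈ w, 1 ≤ a) {k : ℕ} (hk : 1 ≤ k) :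
    maj (((w.filter (fun x => 2 ≤ x)).map (· - 1)).filter (fun x => k ≤ x)) =
      maj (w.filter (fun x => k + 1 ≤ x)) := by
  rw [List.filter_map]
  have heq : (w.filter (fun x => 2 ≤ x)).filter ((fun x => decide (k ≤ x)) ∘ (· - 1)) =
      w.filter (fun x => k + 1 ≤ x) := by
    rw [List.filter_filter]
    apply List.filter_congr
    intro a ha
    have h1 := hw1 a ha
    simp only [Function.comp_apply]
    by_cases h : k + 1 ≤ a
    · simp [h, show k ≤ a - 1 by omega, show 2 ≤ a by omega]
    · have hd1 : decide (k + 1 ≤ a) = false := by simp [h]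
      rw [hd1]
      by_cases h2 : 2 ≤ a
      · simp [h2, show ¬ (k ≤ a - 1) by omega]
      · simp [h2]
  rw [heq]
  apply maj_congr
  apply ligne_map_sub_one
  intro a ha
  have := List.mem_filter.mp ha
  have := of_decide_eq_true this.2
  omega

lemma mc_rec {n : ℕ} {w : List ℕ} (hw : IsPermWord (n+1) w) :
    mc w = (maj w - maj (w.filter (fun x => 2 ≤ x))) ::
      mc ((w.filter (fun x => 2 ≤ x)).map (· - 1)) := by
  have hw1 : ∀ a ∈ w, 1 ≤ a := fun a ha => (perm_word_mem hw ha).1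
  have hlen : w.length = n + 1 := perm_word_length hw
  have hplen : ((w.filter (fun x => 2 ≤ x)).map (· - 1)).length = n := by
    rw [List.length_map]
    have hp : (w.filter (fun x => 2 ≤ x)).Perm
        ((List.range' 1 (n+1)).filter (fun x => 2 ≤ x)) := hw.filter _
    rw [filter_ge2] at hp
    rw [hp.length_eq, List.length_range']
  unfold mc
  rw [hlen, hplen, List.range_succ_eq_map, List.map_cons, List.map_map]
  congr 1
  · have e1 : w.filter (fun x => 0 + 1 ≤ x) = w :=
      List.filter_eq_self.mpr (fun a ha => by
        simp only [decide_eq_true_eq]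
        have := hw1 a ha
        omega)
    have e2 : w.filter (fun x => 0 + 2 ≤ x) = w.filter (fun x => 2 ≤ x) :=
      List.filter_congr (fun a _ => by norm_num)
    rw [e1, e2]
  · apply List.map_congr_left
    intro i _
    simp only [Function.comp_apply]
    have e1 : w.filter (fun x => Nat.succ i + 1 ≤ x) = w.filter (fun x => (i+1) + 1 ≤ x) :=
      List.filter_congr (fun a _ => decide_eq_decide.mpr (by constructor <;> omega))
    have e2 : w.filter (fun x => Nat.succ i + 2 ≤ x) = w.filter (fun x => (i+2) + 1 ≤ x) :=
      List.filter_congr (fun a _ => decide_eq_decide.mpr (by constructor <;> omega))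
    rw [e1, e2, ← maj_map_filter_shift hw1 (show 1 ≤ i + 1 by omega),
      ← maj_map_filter_shift hw1 (show 1 ≤ i + 2 by omega)]

lemma majcode_rec {n : ℕ} {u : List ℕ} (hu : IsPermWord (n+1) u) :
    majcode u = majcode (u.filter (fun x => x ≤ n)) ++
      [maj u - maj (u.filter (fun x => x ≤ n))] := by
  have hlen : u.length = n + 1 := perm_word_length hu
  have hplen : (u.filter (fun x => x ≤ n)).length = n := by
    have hp : (u.filter (fun x => x ≤ n)).Perm
        ((List.range' 1 (n+1)).filter (fun x => x ≤ n)) := hu.filter _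
    rw [filter_le_n] at hp
    rw [hp.length_eq, List.length_range']
  unfold majcode
  rw [hlen, hplen, List.range_succ, List.map_append]
  congr 1
  · apply List.map_congr_left
    intro i hi
    rw [List.mem_range] at hi
    have e1 : (u.filter (fun x => x ≤ n)).filter (fun x => x ≤ i+1) =
        u.filter (fun x => x ≤ i+1) := by
      rw [List.filter_filter]
      apply List.filter_congr
      intro a _
      by_cases h : a ≤ i + 1
      · simp [h, show a ≤ n by omega]
      · simp [h]
    have e2 : (u.filter (fun x => x ≤ n)).filter (fun x => x ≤ i) =
        u.filter (fun x => x ≤ i) := by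
      rw [List.filter_filter]
      apply List.filter_congr
      intro a _
      by_cases h : a ≤ i
      · simp [h, show a ≤ n by omega]
      · simp [h]
    rw [e1, e2]
  · have e1 : u.filter (fun x => x ≤ n + 1) = u :=
      List.filter_eq_self.mpr (fun a ha => by
        simp only [decide_eq_true_eq]
        have := perm_word_mem hu ha
        omega)
    simp only [List.map_cons, List.map_nil]
    rw [e1]

lemma mc_exists : ∀ n : ℕ, ∀ d : List ℕ, d.length = n → Subdiagonal d →
    ∃ w, IsPermWord n w ∧ mc w = d := by
  intro n
  induction n with
  | zero =>
    intro d hlen _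
    have hd : d = [] := List.length_eq_zero_iff.mp hlen
    subst hd
    exact ⟨[], by simp [IsPermWord], by simp [mc]⟩
  | succ n ih =>
    intro d hlen hd
    obtain ⟨d₀, t, rfl⟩ : ∃ d₀ t, d = d₀ :: t := by
      cases d with
      | nil => simp at hlen
      | cons a b => exact ⟨a, b, rfl⟩
    have htlen : t.length = n := by simpa using hlen
    have htsub : Subdiagonal t := by
      intro i hi
      have h := hd (i+1) (by simp only [List.length_cons]; omega)
      simp only [List.getD_cons_succ, List.length_cons] at h
      omega
    obtain ⟨w', hw'P, hw'mc⟩ := ih t htlen htsub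
    have hvperm : (w'.map (· + 1)).Perm (List.range' 2 n) := by
      have h := hw'P.map (· + 1)
      rwa [map_add_one_range'] at h
    set v := w'.map (· + 1) with hvdef
    have hvlen : v.length = n := by
      rw [hvdef, List.length_map, perm_word_length hw'P]
    have hv2 : ∀ a ∈ v, 2 ≤ a := fun a ha => (List.mem_range'_1.mp (hvperm.mem_iff.mp ha)).1
    have hligv : ligne v = ligne w' := ligne_map_add_one w'
    have hSsub : ligne v ⊆ Finset.Icc 1 (n - 1) := by
      have h := ligne_subset v
      rwa [hvlen] at h
    have hd0 : d₀ ≤ n := by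
      have h := hd 0 (by simp)
      simp only [List.getD_cons_zero, List.length_cons] at h
      omega
    obtain ⟨j, hjle, hgj⟩ := gS_surj hSsub hd0
    have hinsP : IsPermWord (n+1) (ins v j 1) := by
      unfold IsPermWord
      refine (ins_perm j 1).trans ?_
      rw [range'_succ_left]
      exact hvperm.cons 1
    refine ⟨ins v j 1, hinsP, ?_⟩
    have hfil : (ins v j 1).filter (fun x => 2 ≤ x) = v :=
      filter_ins _ _ _ (by simp) (fun a ha => by
        simp only [decide_eq_true_eq]
        exact hv2 a ha)
    rw [mc_rec hinsP, hfil]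
    have hmapv : v.map (· - 1) = w' := by
      rw [hvdef, List.map_map]
      have h : w'.map ((· - 1) ∘ (· + 1)) = w'.map (fun a => a) :=
        List.map_congr_left (fun a _ => by simp)
      rw [h, List.map_id']
    have hmaj : maj (ins v j 1) = maj v + d₀ := by
      have hlig : ligne (ins v j 1) = NewS (ligne v) j v.length :=
        ligne_ins_small (by omega) (fun a ha => by have := hv2 a ha; omega)
      unfold maj
      rw [hlig, hvlen]
      have hsum := sum_NewS hSsub hjle
      rw [hgj] at hsum
      exact hsum
    rw [hmapv, hw'mc, hmaj]
    congr 1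
    omega

lemma keyK : ∀ n : ℕ, ∀ w : List ℕ, IsPermWord n w →
    ∃ u, IsPermWord n u ∧ majcode u = (mc w).reverse ∧ ligne u = ligne w := by
  intro n
  induction n with
  | zero =>
    intro w hw
    have hnil : w = [] := hw.eq_nil
    subst hnil
    exact ⟨[], by simp [IsPermWord], by simp [majcode, mc], rfl⟩
  | succ n ih =>
    intro w hw
    have h1w : (1 : ℕ) ∈ w := hw.mem_iff.mpr (List.mem_range'_1.mpr ⟨le_refl 1, by omega⟩)
    obtain ⟨j, hjle, hwdec⟩ := decomp h1w (perm_word_nodup hw) (fun x => 2 ≤ x)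
      (by simp) (fun a ha hne => by
        simp only [decide_eq_true_eq]
        have := perm_word_mem hw ha
        omega)
    have hvperm : (w.filter (fun x => 2 ≤ x)).Perm (List.range' 2 n) := by
      have hp : (w.filter (fun x => 2 ≤ x)).Perm
          ((List.range' 1 (n+1)).filter (fun x => 2 ≤ x)) := hw.filter _
      rwa [filter_ge2] at hp
    set v := w.filter (fun x => 2 ≤ x) with hvdef
    have hvlen : v.length = n := by rw [hvperm.length_eq, List.length_range']
    have hv2 : ∀ a ∈ v, 2 ≤ a := fun a ha => (List.mem_range'_1.mp (hvperm.mem_iff.mp ha)).1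
    have hw₁P : IsPermWord n (v.map (· - 1)) := by
      unfold IsPermWord
      have h := hvperm.map (· - 1)
      rwa [map_sub_one_range'] at h
    obtain ⟨u', hu'P, hu'maj, hu'lig⟩ := ih (v.map (· - 1)) hw₁P
    have hliw₁ : ligne (v.map (· - 1)) = ligne v :=
      ligne_map_sub_one (fun a ha => by have := hv2 a ha; omega)
    have hu'len : u'.length = n := perm_word_length hu'P
    have hSsub : ligne u' ⊆ Finset.Icc 1 (n-1) := by
      have h := ligne_subset u'
      rwa [hu'len] at h
    have hSv : ligne u' = ligne v := hu'lig.trans hliw₁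
    obtain ⟨p, hple, hNew⟩ := crux (S := ligne u') hSsub (show j ≤ n by omega)
    have hu'top : ∀ a ∈ u', a < n + 1 := fun a ha => (perm_word_mem hu'P ha).2
    have hinsP : IsPermWord (n+1) (ins u' p (n+1)) := by
      unfold IsPermWord
      refine (ins_perm p (n+1)).trans ?_
      refine (hu'P.cons (n+1)).trans ?_
      rw [range'_succ_right]
      exact (List.perm_append_singleton _ _).symm
    have hligI : ligne (ins u' p (n+1)) = NewS (ligne v) j n := by
      rw [ligne_ins_large (by omega) hu'top, hu'len, hNew, hSv]
    have hligW : ligne w = NewS (ligne v) j n := by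
      conv_lhs => rw [hwdec]
      rw [ligne_ins_small hjle (fun a ha => by have := hv2 a ha; omega), hvlen]
    refine ⟨ins u' p (n+1), hinsP, ?_, ?_⟩
    · rw [majcode_rec hinsP]
      have hfl : (ins u' p (n+1)).filter (fun x => x ≤ n) = u' :=
        filter_ins _ _ _ (by simp) (fun a ha => by
          simp only [decide_eq_true_eq]
          have := hu'top a ha
          omega)
      rw [hfl, hu'maj, mc_rec hw, ← hvdef, List.reverse_cons]
      have e1 : maj (ins u' p (n+1)) = maj w := maj_congr (hligI.trans hligW.symm)
      have e2 : maj u' = maj v := maj_congr hSv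
      rw [e1, e2]
    · rw [hligI, hligW]

lemma majcode_inj : ∀ n : ℕ, ∀ u u' : List ℕ, IsPermWord n u → IsPermWord n u' →
    majcode u = majcode u' → ligne u = ligne u' := by
  intro n
  induction n with
  | zero =>
    intro u u' hu hu' _
    rw [hu.eq_nil, hu'.eq_nil]
  | succ n ih =>
    intro u u' hu hu' heq
    have htop : (n+1 : ℕ) ∈ u := hu.mem_iff.mpr (List.mem_range'_1.mpr ⟨by omega, by omega⟩)
    have htop' : (n+1 : ℕ) ∈ u' := hu'.mem_iff.mpr (List.mem_range'_1.mpr ⟨by omega, by omega⟩)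
    obtain ⟨j, hjle, hudec⟩ := decomp htop (perm_word_nodup hu) (fun x => x ≤ n)
      (by simp only [decide_eq_true_eq]; omega) (fun a ha hne => by
        simp only [decide_eq_true_eq]
        have := perm_word_mem hu ha
        omega)
    obtain ⟨j', hjle', hudec'⟩ := decomp htop' (perm_word_nodup hu') (fun x => x ≤ n)
      (by simp only [decide_eq_true_eq]; omega) (fun a ha hne => by
        simp only [decide_eq_true_eq]
        have := perm_word_mem hu' ha
        omega)
    have haP : IsPermWord n (u.filter (fun x => x ≤ n)) := by
      unfold IsPermWord
      have hp : (u.filter (fun x => x ≤ n)).Perm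
          ((List.range' 1 (n+1)).filter (fun x => x ≤ n)) := hu.filter _
      rwa [filter_le_n] at hp
    have haP' : IsPermWord n (u'.filter (fun x => x ≤ n)) := by
      unfold IsPermWord
      have hp : (u'.filter (fun x => x ≤ n)).Perm
          ((List.range' 1 (n+1)).filter (fun x => x ≤ n)) := hu'.filter _
      rwa [filter_le_n] at hp
    have halen : (u.filter (fun x => x ≤ n)).length = n := perm_word_length haP
    have halen' : (u'.filter (fun x => x ≤ n)).length = n := perm_word_length haP'
    rw [majcode_rec hu, majcode_rec hu'] at heq
    obtain ⟨h1, h2⟩ := List.append_inj heq (by rw [length_majcode, length_majcode, halen, halen'])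
    have hlig : ligne (u.filter (fun x => x ≤ n)) = ligne (u'.filter (fun x => x ≤ n)) :=
      ih _ _ haP haP' h1
    have hmaja : maj (u.filter (fun x => x ≤ n)) = maj (u'.filter (fun x => x ≤ n)) :=
      maj_congr hlig
    have h2' : maj u - maj (u.filter (fun x => x ≤ n)) =
        maj u' - maj (u'.filter (fun x => x ≤ n)) := by
      simpa using h2
    have hSsub : ligne (u.filter (fun x => x ≤ n)) ⊆ Finset.Icc 1 (n-1) := by
      have h := ligne_subset (u.filter (fun x => x ≤ n))
      rwa [halen] at h
    have hatop : ∀ a ∈ u.filter (fun x => x ≤ n), a < n + 1 := fun a ha => by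
      have := List.mem_filter.mp ha
      have := of_decide_eq_true this.2
      omega
    have hatop' : ∀ a ∈ u'.filter (fun x => x ≤ n), a < n + 1 := fun a ha => by
      have := List.mem_filter.mp ha
      have := of_decide_eq_true this.2
      omega
    have hligu : ligne u = NewL (ligne (u.filter (fun x => x ≤ n))) j n := by
      conv_lhs => rw [hudec]
      rw [ligne_ins_large hjle hatop, halen]
    have hligu' : ligne u' = NewL (ligne (u'.filter (fun x => x ≤ n))) j' n := by
      conv_lhs => rw [hudec']
      rw [ligne_ins_large hjle' hatop', halen']
    have hmaju : maj u = (ligne (u.filter (fun x => x ≤ n))).sum (fun i => i) +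
        gL (ligne (u.filter (fun x => x ≤ n))) j n := by
      unfold maj
      rw [hligu]
      exact sum_NewL hSsub (by omega)
    have hmaju' : maj u' = (ligne (u.filter (fun x => x ≤ n))).sum (fun i => i) +
        gL (ligne (u.filter (fun x => x ≤ n))) j' n := by
      unfold maj
      rw [hligu', ← hlig]
      exact sum_NewL hSsub (by omega)
    have hmaja2 : maj (u.filter (fun x => x ≤ n)) =
        (ligne (u.filter (fun x => x ≤ n))).sum (fun i => i) := rfl
    have hgeq : gL (ligne (u.filter (fun x => x ≤ n))) j n =
        gL (ligne (u.filter (fun x => x ≤ n))) j' n := by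
      rw [hmaju, hmaju', hmaja2, ← hmaja] at h2'
      omega
    have hj : j = j' := gL_inj hSsub (by omega) (by omega) hgeq
    rw [hligu, hligu', hlig, hj]

end Stmt17Aux

theorem stmt17 (d : List ℕ) (hd : Subdiagonal d) :
    El d = Eul d.reverse := by
  classical
  open Stmt17Aux in
  obtain ⟨w₀, hw₀P, hw₀mc⟩ := Stmt17Aux.mc_exists d.length d rfl hd
  have h1 : ∃ w, IsPermWord d.length w ∧ mc w = d := ⟨w₀, hw₀P, hw₀mc⟩
  obtain ⟨hc1P, hc1mc⟩ := h1.choose_spec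
  obtain ⟨u₁, hu₁P, hu₁maj, hu₁lig⟩ := Stmt17Aux.keyK d.length h1.choose hc1P
  have h2 : ∃ u, IsPermWord d.reverse.length u ∧ majcode u = d.reverse := by
    refine ⟨u₁, ?_, ?_⟩
    · rw [List.length_reverse]
      exact hu₁P
    · rw [hu₁maj, hc1mc]
  obtain ⟨hc2P, hc2mc⟩ := h2.choose_spec
  have hlig2 : ligne h2.choose = ligne u₁ := by
    refine Stmt17Aux.majcode_inj d.reverse.length _ _ hc2P ?_ ?_
    · rw [List.length_reverse]
      exact hu₁P
    · rw [hc2mc, hu₁maj, hc1mc]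
  unfold El Eul
  rw [dif_pos h1, dif_pos h2, hlig2, hu₁lig]
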